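/- Let p > 2 and c > 0. There exists a constant κ > 0 (one may take κ = (c·(p−2)^{p−1}/(p−1)^{p−1})^{1/(p−2)}) such that the function u(x, t) := κ·((1 − x + c·t)₊)^{(p−1)/(p−2)} on ℝ × ℝ satisfies the one-dimensional parabolic p-Laplace equation ∂_t u(x, t) = ∂_x(|∂_x u(x, t)|^{p−2}·∂_x u(x, t)) pointwise at every (x, t) ∈ ℝ² with 1 − x + c·t ≠ 0. In particular u is a nonnegative, nonconstant function defined on all of ℝ × ℝ. -/

import Mathlib

open Real Filter Topology

/-- Derivative of `y ↦ κ (l y)₊^α` at a point where `l y₀ > 0`, for affine-like `l`. -/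
private lemma tw_deriv_pos (κ α : ℝ) (l : ℝ → ℝ) (m : ℝ)
    (hl : ∀ y, HasDerivAt l m y) (y0 : ℝ) (h0 : 0 < l y0) :
    deriv (fun y => κ * max (l y) 0 ^ α) y0 = κ * α * l y0 ^ (α - 1) * m := by
  have hcont : Continuous l := by
    rw [continuous_iff_continuousAt]; exact fun y => (hl y).continuousAt
  have hopen : IsOpen {y | 0 < l y} := isOpen_lt continuous_const hcont
  have hev : (fun y => κ * max (l y) 0 ^ α) =ᶠ[𝓝 y0] fun y => κ * l y ^ α := by
    filter_upwards [hopen.mem_nhds h0] with y hy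
    rw [max_eq_left hy.le]
  rw [hev.deriv_eq]
  have h1 : HasDerivAt (fun y => κ * l y ^ α) (κ * (α * l y0 ^ (α - 1) * m)) y0 :=
    ((Real.hasDerivAt_rpow_const (Or.inl h0.ne')).comp y0 (hl y0)).const_mul κ
  rw [h1.deriv]; ring

/-- Derivative of `y ↦ κ (l y)₊^α` vanishes where `l y₀ < 0`. -/
private lemma tw_deriv_neg (κ α : ℝ) (l : ℝ → ℝ) (hcont : Continuous l)
    (y0 : ℝ) (h0 : l y0 < 0) :
    deriv (fun y => κ * max (l y) 0 ^ α) y0 = 0 := by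
  have hopen : IsOpen {y | l y < 0} := isOpen_lt hcont continuous_const
  have hev : (fun y => κ * max (l y) 0 ^ α) =ᶠ[𝓝 y0] fun _ => κ * (0 : ℝ) ^ α := by
    filter_upwards [hopen.mem_nhds h0] with y hy
    rw [max_eq_right hy.le]
  rw [hev.deriv_eq, deriv_const]

theorem traveling_wave_p_laplace (p c : ℝ) (hp : 2 < p) (hc : 0 < c) :
    ∃ κ : ℝ,
      κ = (c * (p - 2) ^ (p - 1) / (p - 1) ^ (p - 1)) ^ ((1 : ℝ) / (p - 2)) ∧
      0 < κ ∧
      (∀ x t : ℝ, 1 - x + c * t ≠ 0 →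
        deriv (fun s : ℝ => κ * max (1 - x + c * s) 0 ^ ((p - 1) / (p - 2))) t =
          deriv (fun y : ℝ =>
            |deriv (fun z : ℝ => κ * max (1 - z + c * t) 0 ^ ((p - 1) / (p - 2))) y| ^ (p - 2) *
              deriv (fun z : ℝ => κ * max (1 - z + c * t) 0 ^ ((p - 1) / (p - 2))) y) x) ∧
      (∀ x t : ℝ, 0 ≤ κ * max (1 - x + c * t) 0 ^ ((p - 1) / (p - 2))) ∧
      (∃ x t x' t' : ℝ,
        κ * max (1 - x + c * t) 0 ^ ((p - 1) / (p - 2)) ≠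
          κ * max (1 - x' + c * t') 0 ^ ((p - 1) / (p - 2))) := by
  have hp2 : (0:ℝ) < p - 2 := by linarith
  have hp1 : (0:ℝ) < p - 1 := by linarith
  set α : ℝ := (p - 1) / (p - 2) with hαdef
  have hαpos : 0 < α := div_pos hp1 hp2
  have hα1 : (α - 1) * (p - 2) = 1 := by
    rw [hαdef, sub_mul, div_mul_cancel₀ _ hp2.ne', one_mul]; ring
  set B : ℝ := c * (p - 2) ^ (p - 1) / (p - 1) ^ (p - 1) with hBdef
  have hB : 0 < B := div_pos (mul_pos hc (rpow_pos_of_pos hp2 _)) (rpow_pos_of_pos hp1 _)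
  set κ : ℝ := B ^ ((1:ℝ)/(p-2)) with hκdef
  have hκ : 0 < κ := rpow_pos_of_pos hB _
  set A : ℝ := κ * α with hAdef
  have hA : 0 < A := mul_pos hκ hαpos
  have hκp2 : κ ^ (p - 2) = B := by
    rw [hκdef, ← Real.rpow_mul hB.le, one_div, inv_mul_cancel₀ hp2.ne', Real.rpow_one]
  have hkey : A ^ (p - 2) * A = κ * c := by
    have hAp : A ^ (p - 2) = B * ((p - 1) ^ (p - 2) / (p - 2) ^ (p - 2)) := by
      rw [hAdef, Real.mul_rpow hκ.le hαpos.le, hκp2, hαdef,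
        Real.div_rpow hp1.le hp2.le]
    have gen : ∀ x : ℝ, 0 < x → x ^ (p - 1) = x ^ (p - 2) * x := by
      intro x hx
      rw [show p - 1 = (p - 2) + 1 by ring, Real.rpow_add hx, Real.rpow_one]
    have e1 := gen _ hp2
    have e2 := gen _ hp1
    have n1 : (p - 2 : ℝ) ^ (p - 2) ≠ 0 := (rpow_pos_of_pos hp2 _).ne'
    have n2 : (p - 1 : ℝ) ^ (p - 2) ≠ 0 := (rpow_pos_of_pos hp1 _).ne'
    rw [hAp, hBdef, hAdef, e1, e2, hαdef]
    field_simp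
  refine ⟨κ, rfl, hκ, ?_, ?_, ?_⟩
  · -- PDE
    intro x t hxt
    rcases hxt.lt_or_gt with h | h
    · -- negative case : 1 - x + c*t < 0
      have hcx : Continuous fun s : ℝ => 1 - x + c * s := by fun_prop
      have hcz : Continuous fun z : ℝ => 1 - z + c * t := by fun_prop
      rw [tw_deriv_neg κ α _ hcx t h]
      have hopen : IsOpen {y : ℝ | 1 - y + c * t < 0} := isOpen_lt hcz continuous_const
      have hev : (fun y : ℝ =>
          |deriv (fun z : ℝ => κ * max (1 - z + c * t) 0 ^ α) y| ^ (p - 2) *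
            deriv (fun z : ℝ => κ * max (1 - z + c * t) 0 ^ α) y) =ᶠ[𝓝 x]
          fun _ => (0:ℝ) := by
        filter_upwards [hopen.mem_nhds h] with y hy
        rw [tw_deriv_neg κ α _ hcz y hy, mul_zero]
      rw [hev.deriv_eq, deriv_const]
    · -- positive case : 0 < 1 - x + c*t
      have hlx : ∀ s : ℝ, HasDerivAt (fun s : ℝ => 1 - x + c * s) c s := by
        intro s
        simpa using ((hasDerivAt_id s).const_mul c).const_add (1 - x)
      have hlz : ∀ z : ℝ, HasDerivAt (fun z : ℝ => 1 - z + c * t) (-1) z := by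
        intro z
        simpa using ((hasDerivAt_id z).const_sub 1).add_const (c * t)
      have hcz : Continuous fun z : ℝ => 1 - z + c * t := by fun_prop
      rw [tw_deriv_pos κ α _ c hlx t h]
      have hopen : IsOpen {y : ℝ | 0 < 1 - y + c * t} := isOpen_lt continuous_const hcz
      -- the inner flux function equals -(A^(p-2)*A) * s^α near x
      have hev : (fun y : ℝ =>
          |deriv (fun z : ℝ => κ * max (1 - z + c * t) 0 ^ α) y| ^ (p - 2) *
            deriv (fun z : ℝ => κ * max (1 - z + c * t) 0 ^ α) y) =ᶠ[𝓝 x]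
          fun y => -(A ^ (p - 2) * A) * (1 - y + c * t) ^ α := by
        filter_upwards [hopen.mem_nhds h] with y hy
        have hd : deriv (fun z : ℝ => κ * max (1 - z + c * t) 0 ^ α) y =
            -(A * (1 - y + c * t) ^ (α - 1)) := by
          rw [tw_deriv_pos κ α _ (-1) hlz y hy, hAdef]; ring
        have hsnn : (0:ℝ) ≤ (1 - y + c * t) ^ (α - 1) := rpow_nonneg hy.le _
        rw [hd, abs_neg, abs_of_nonneg (mul_nonneg hA.le hsnn),
          Real.mul_rpow hA.le hsnn, ← Real.rpow_mul hy.le, hα1, Real.rpow_one,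
          Real.rpow_sub hy, Real.rpow_one]
        field_simp
      rw [hev.deriv_eq]
      have hd2 : HasDerivAt (fun y : ℝ => -(A ^ (p - 2) * A) * (1 - y + c * t) ^ α)
          (-(A ^ (p - 2) * A) * (α * (1 - x + c * t) ^ (α - 1) * (-1))) x :=
        ((Real.hasDerivAt_rpow_const (Or.inl h.ne')).comp x (hlz x)).const_mul _
      rw [hd2.deriv]
      rw [show -(A ^ (p - 2) * A) * (α * (1 - x + c * t) ^ (α - 1) * (-1)) =
        (A ^ (p - 2) * A) * α * (1 - x + c * t) ^ (α - 1) by ring, hkey]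
      ring
  · -- nonnegativity
    intro x t
    exact mul_nonneg hκ.le (rpow_nonneg (le_max_right _ _) _)
  · -- nonconstant
    refine ⟨0, 0, 2, 0, ?_⟩
    have h1 : (1:ℝ) - 0 + c * 0 = 1 := by ring
    have h2 : (1:ℝ) - 2 + c * 0 = -1 := by ring
    rw [h1, h2, max_eq_left zero_le_one, max_eq_right (by norm_num : (-1:ℝ) ≤ 0),
      Real.one_rpow, Real.zero_rpow hαpos.ne', mul_one, mul_zero]
    exact hκ.ne'
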